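/- Let R be a complete local UFD with maximal ideal m and residue characteristic ≠ 2, K = Frac(R), V a 2-dimensional K-vector space, and ρ: G → Aut_K(V) satisfying: ρ irreducible, there exists a G-stable free R-lattice, tr ρ mod m = ψ + ψ' with ψ ≠ ψ'. Then for any G-stable free lattice T, the submodules T(ψ) = g_ψ T and T(ψ') = g_ψ' T (images of the idempotent-like projectors built from g₀) are free R-modules of rank one, and T = T(ψ) ⊕ T(ψ') as R[g₀]-modules. -/

import Mathlib

open IsLocalRing

/-- The projector `(f - b·id)/(a - b)` onto the `a`-eigenspace of `f`, for `a, b ∈ R`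
viewed in `K`. -/
noncomputable def eigProj (R : Type*) {K V : Type*} [CommRing R] [Field K] [Algebra R K]
    [AddCommGroup V] [Module K V] (f : V →ₗ[K] V) (a b : R) : V →ₗ[K] V :=
  (algebraMap R K (a - b))⁻¹ • (f - algebraMap R K b • (LinearMap.id : V →ₗ[K] V))

/-- A nonzero f.g. projective `R`-submodule of `V` contained in a `K`-line is a free
rank-one span. -/
lemma cyclic_aux {R K V : Type*} [CommRing R] [IsDomain R] [IsLocalRing R]
    [Field K] [Algebra R K] [IsFractionRing R K]
    [AddCommGroup V] [Module K V] [Module R V] [IsScalarTower R K V] [FiniteDimensional K V]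
    (P : Submodule R V) (hfg : P.FG) (hproj : Module.Projective R P) (hne : P ≠ ⊥)
    (S : Submodule K V) (hsub : ∀ x ∈ P, x ∈ S) (hrk : Module.finrank K S ≤ 1) :
    ∃ v : V, v ≠ 0 ∧ P = Submodule.span R {v} := by
  haveI := hproj
  haveI : Module.Finite R P := Module.Finite.iff_fg.mpr hfg
  haveI : Module.FinitePresentation R P := Module.finitePresentation_of_projective R P
  haveI : Module.Free R P := Module.free_of_flat_of_isLocalRing
  haveI : Nontrivial P := Submodule.nontrivial_iff_ne_bot.mpr hne
  set ι := Module.Free.ChooseBasisIndex R P with hι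
  let b : Module.Basis ι R P := Module.Free.chooseBasis R P
  obtain ⟨i₀⟩ := b.index_nonempty
  haveI : Subsingleton ι := by
    constructor
    intro i j
    by_contra hij
    have hbi : ((b i : P) : V) ≠ 0 := by
      simpa using b.ne_zero i
    -- both in the line S
    have hSi : ((b i : P) : V) ∈ S := hsub _ (b i).2
    have hSj : ((b j : P) : V) ∈ S := hsub _ (b j).2
    have hspan : (K ∙ ((b i : P) : V)) = S := by
      apply Submodule.eq_of_le_of_finrank_le
      · rwa [Submodule.span_singleton_le_iff_mem]
      · rwa [finrank_span_singleton hbi]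
    obtain ⟨k, hk⟩ := Submodule.mem_span_singleton.mp (hspan ▸ hSj)
    obtain ⟨s, r, hr⟩ := IsLocalization.exists_integer_multiple (nonZeroDivisors R) k
    have hs0 : (s : R) ≠ 0 := nonZeroDivisors.coe_ne_zero s
    have hrel : ((s : R) • b j : P) = (r : R) • b i := by
      apply Subtype.ext
      push_cast [Submodule.coe_smul]
      rw [← hk, ← algebraMap_smul K (s : R), ← algebraMap_smul K r, smul_smul, hr,
        Algebra.smul_def]
    have h2 := congrArg (fun x => b.repr x j) hrel
    simp only [map_smul, Module.Basis.repr_self, Finsupp.smul_single, smul_eq_mul, mul_one,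
      Finsupp.smul_apply, Finsupp.single_apply, if_neg hij, mul_zero] at h2
    exact hs0 h2
  -- now ι is a singleton
  haveI : Unique ι := ⟨⟨i₀⟩, fun i => Subsingleton.elim i i₀⟩
  refine ⟨((b default : P) : V), by simpa using b.ne_zero default, le_antisymm ?_ ?_⟩
  · intro x hx
    have hsum := b.sum_repr ⟨x, hx⟩
    rw [Fintype.sum_unique] at hsum
    exact Submodule.mem_span_singleton.mpr ⟨b.repr ⟨x, hx⟩ default, congrArg Subtype.val hsum⟩
  · rw [Submodule.span_le, Set.singleton_subset_iff]
    exact (b default).2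

lemma eigProj_aux {R K V : Type*} [CommRing R] [IsDomain R] [IsLocalRing R]
    [Field K] [Algebra R K] [IsFractionRing R K]
    [AddCommGroup V] [Module K V] [Module R V] [IsScalarTower R K V]
    (hdim : Module.finrank K V = 2)
    (f : V →ₗ[K] V) (l1 l2 : R)
    (hCH : ∀ v, f (f v) = (algebraMap R K l1 + algebraMap R K l2) • f v
      - (algebraMap R K l1 * algebraMap R K l2) • v)
    (htrace : LinearMap.trace K V f = algebraMap R K l1 + algebraMap R K l2)
    (hunit : IsUnit (l1 - l2))
    (T : Submodule R V) (hTfg : T.FG) (hTspan : Submodule.span K (T : Set V) = ⊤)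
    (hTf : ∀ v ∈ T, f v ∈ T) (hTfree : Module.Free R T) :
    (∃ v : V, v ≠ 0 ∧
        Submodule.map ((eigProj R f l1 l2).restrictScalars R) T = Submodule.span R {v}) ∧
    (∀ v ∈ Submodule.map ((eigProj R f l1 l2).restrictScalars R) T,
        f v ∈ Submodule.map ((eigProj R f l1 l2).restrictScalars R) T) ∧
    Submodule.map ((eigProj R f l1 l2).restrictScalars R) T
      ⊓ Submodule.map ((eigProj R f l2 l1).restrictScalars R) T = ⊥ ∧
    Submodule.map ((eigProj R f l1 l2).restrictScalars R) T
      ⊔ Submodule.map ((eigProj R f l2 l1).restrictScalars R) T = T := by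
  haveI : FiniteDimensional K V := FiniteDimensional.of_finrank_pos (by rw [hdim]; norm_num)
  have h0 : l1 - l2 ≠ 0 := hunit.ne_zero
  have hane : algebraMap R K l1 - algebraMap R K l2 ≠ 0 := by
    rw [← map_sub]
    exact fun h => h0 (IsFractionRing.injective R K (by rw [h, map_zero]))
  have hbne : algebraMap R K l2 - algebraMap R K l1 ≠ 0 := by
    intro h; exact hane (by rw [← neg_sub] at h; simpa using neg_eq_zero.mp h)
  obtain ⟨u, hu⟩ := hunit
  have hw : (↑u⁻¹ : R) * (l1 - l2) = 1 := by rw [← hu]; exact u.inv_mul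
  set w : R := (↑u⁻¹ : R) with hwdef
  set p := eigProj R f l1 l2 with hpdef
  set q := eigProj R f l2 l1 with hqdef
  have hp : ∀ v, p v = (algebraMap R K l1 - algebraMap R K l2)⁻¹ • (f v - algebraMap R K l2 • v) := by
    intro v; simp [hpdef, eigProj, map_sub]
  have hq : ∀ v, q v = (algebraMap R K l2 - algebraMap R K l1)⁻¹ • (f v - algebraMap R K l1 • v) := by
    intro v; simp [hqdef, eigProj, map_sub]
  have hadd : ∀ v, p v + q v = v := by
    intro v
    rw [hp, hq]
    match_scalars <;> field_simp <;> ring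
  have hqp : ∀ v, q (p v) = 0 := by
    intro v
    simp only [hq, hp, map_smul, map_sub, hCH, smul_sub, smul_smul]
    match_scalars <;> field_simp <;> ring
  have hpq : ∀ v, p (q v) = 0 := by
    intro v
    simp only [hq, hp, map_smul, map_sub, hCH, smul_sub, smul_smul]
    match_scalars <;> field_simp <;> ring
  have hpp : ∀ v, p (p v) = p v := by
    intro v; have h := hadd (p v); rwa [hqp v, add_zero] at h
  have hcomm : ∀ v, f (p v) = p (f v) := by
    intro v; simp only [hp, map_smul, map_sub]
  have hinv : (algebraMap R K l1 - algebraMap R K l2)⁻¹ = algebraMap R K w :=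
    inv_eq_of_mul_eq_one_left (by rw [← map_sub, ← map_mul, hw, map_one])
  have hinv' : (algebraMap R K l2 - algebraMap R K l1)⁻¹ = algebraMap R K (-w) :=
    inv_eq_of_mul_eq_one_left
      (by rw [map_neg, neg_mul, ← mul_neg, neg_sub, ← map_sub, ← map_mul, hw, map_one])
  have hmapP : ∀ v ∈ T, p v ∈ T := by
    intro v hv
    rw [hp, hinv, algebraMap_smul, algebraMap_smul]
    exact T.smul_mem _ (T.sub_mem (hTf v hv) (T.smul_mem _ hv))
  have hmapQ : ∀ v ∈ T, q v ∈ T := by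
    intro v hv
    rw [hq, hinv', algebraMap_smul, algebraMap_smul]
    exact T.smul_mem _ (T.sub_mem (hTf v hv) (T.smul_mem _ hv))
  set P := Submodule.map (p.restrictScalars R) T with hPdef
  set Q := Submodule.map (q.restrictScalars R) T with hQdef
  have hPT : P ≤ T := by rintro x ⟨t, ht, rfl⟩; exact hmapP t ht
  have hQT : Q ≤ T := by rintro x ⟨t, ht, rfl⟩; exact hmapQ t ht
  have hstab : ∀ v ∈ P, f v ∈ P := by
    rintro x ⟨t, ht, rfl⟩
    exact ⟨f t, hTf t ht, (hcomm t).symm⟩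
  have hfix : ∀ x ∈ P, p x = x := by rintro x ⟨t, ht, rfl⟩; exact hpp t
  have hkill : ∀ x ∈ Q, p x = 0 := by rintro x ⟨t, ht, rfl⟩; exact hpq t
  have hinf : P ⊓ Q = ⊥ := by
    rw [eq_bot_iff]
    rintro x ⟨hx1, hx2⟩
    rw [Submodule.mem_bot]
    exact (hfix x hx1).symm.trans (hkill x hx2)
  have hsup : P ⊔ Q = T := by
    apply le_antisymm (sup_le hPT hQT)
    intro t ht
    have h := Submodule.add_mem_sup (S := P) (T := Q)
      (Submodule.mem_map_of_mem (f := p.restrictScalars R) ht)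
      (Submodule.mem_map_of_mem (f := q.restrictScalars R) ht)
    simpa only [LinearMap.restrictScalars_apply, hadd t] using h
  -- nonvanishing of p and q
  have htrconst : ∀ c : K, f = c • (LinearMap.id : V →ₗ[K] V) →
      algebraMap R K l1 + algebraMap R K l2 = c * 2 := by
    intro c hc
    rw [← htrace, hc, map_smul, LinearMap.trace_id, hdim]
    push_cast
    rw [smul_eq_mul]
  have hqne : q ≠ 0 := by
    intro hq0
    have hfa : f = algebraMap R K l1 • (LinearMap.id : V →ₗ[K] V) := by
      ext v
      have h := LinearMap.ext_iff.mp hq0 v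
      rw [hq] at h
      rcases smul_eq_zero.mp h with h | h
      · exact absurd h (inv_ne_zero hbne)
      · simpa [sub_eq_zero] using h
    have h2 := htrconst _ hfa
    apply hbne
    rw [sub_eq_zero]
    linear_combination h2
  have hPbot : P ≠ ⊥ := by
    intro hbot
    have hp0 : ∀ v, p v = 0 := by
      intro v
      have hvmem : v ∈ Submodule.span K (T : Set V) := by rw [hTspan]; trivial
      induction hvmem using Submodule.span_induction with
      | mem x hx =>
          have hx2 : (p.restrictScalars R) x ∈ (⊥ : Submodule R V) :=
            hbot ▸ Submodule.mem_map_of_mem hx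
          simpa using hx2
      | zero => simp
      | add x y _ _ hx hy => rw [map_add, hx, hy, add_zero]
      | smul c x _ hx => rw [map_smul, hx, smul_zero]
    have hfb : f = algebraMap R K l2 • (LinearMap.id : V →ₗ[K] V) := by
      ext v
      have h := hp0 v
      rw [hp] at h
      rcases smul_eq_zero.mp h with h | h
      · exact absurd h (inv_ne_zero hane)
      · simpa [sub_eq_zero] using h
    have h2 := htrconst _ hfb
    apply hane
    rw [sub_eq_zero]
    linear_combination h2
  have hrsup : LinearMap.range p ⊔ LinearMap.range q = ⊤ := by
    rw [eq_top_iff]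
    rintro v -
    have h := Submodule.add_mem_sup (LinearMap.mem_range_self p v) (LinearMap.mem_range_self q v)
    rwa [hadd v] at h
  have hrinf : LinearMap.range p ⊓ LinearMap.range q = ⊥ := by
    rw [eq_bot_iff]
    rintro x ⟨⟨s, hs⟩, ⟨t, ht⟩⟩
    rw [Submodule.mem_bot]
    have h1 : p x = x := by rw [← hs]; exact hpp s
    have h2 : p x = 0 := by rw [← ht]; exact hpq t
    exact h1.symm.trans h2
  have hfr := Submodule.finrank_sup_add_finrank_inf_eq (LinearMap.range p) (LinearMap.range q)
  rw [hrsup, hrinf, finrank_bot, finrank_top, hdim] at hfr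
  have hrq0 : Module.finrank K (LinearMap.range q) ≠ 0 := by
    intro h
    exact hqne (LinearMap.range_eq_bot.mp (Submodule.finrank_eq_zero.mp h))
  have hrankp : Module.finrank K (LinearMap.range p) ≤ 1 := by omega
  haveI : Module.Free R T := hTfree
  have hproj : Module.Projective R P := by
    refine Module.Projective.of_split (Submodule.inclusion hPT)
      (LinearMap.codRestrict P ((p.restrictScalars R).comp T.subtype)
        (fun t => Submodule.mem_map_of_mem t.2)) ?_
    apply LinearMap.ext
    intro x
    apply Subtype.ext
    simpa using hfix x x.2
  have hcyc := cyclic_aux P (hTfg.map _) hproj hPbot (LinearMap.range p)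
    (by rintro x ⟨t, ht, rfl⟩; exact ⟨t, rfl⟩) hrankp
  exact ⟨hcyc, hstab, hinf, hsup⟩

/-- Let `R` be a complete local UFD of residue characteristic `≠ 2`, and
`ρ` a two-dimensional irreducible representation over `K = Frac R` with a stable free
lattice, whose trace mod `m` is the sum of two distinct characters `ψ ≠ ψ'`. Choose
`g₀ ∈ G` with `ψ g₀ ≠ ψ' g₀` and (by Hensel) roots `λψ, λψ' ∈ R` of the characteristic
polynomial of `ρ g₀` lifting `ψ g₀, ψ' g₀`. Then for any `G`-stable free lattice `T`, the
components `T(ψ) = g_ψ T` and `T(ψ') = g_ψ' T` are free `R`-modules of rank one (spans of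
a single nonzero vector), stable under `ρ g₀`, and `T = T(ψ) ⊕ T(ψ')` internally. -/
theorem eigcomponents_free_rank_one
    {R K V G : Type*} [CommRing R] [IsDomain R] [IsLocalRing R]
    [UniqueFactorizationMonoid R] [IsAdicComplete (maximalIdeal R) R]
    [Field K] [Algebra R K] [IsFractionRing R K]
    [AddCommGroup V] [Module K V] [Module R V] [IsScalarTower R K V] [Group G]
    (hchar : ringChar (R ⧸ maximalIdeal R) ≠ 2)
    (hdim : Module.finrank K V = 2)
    (ρ : Representation K G V)
    (hirr : ∀ W : Submodule K V, (∀ g : G, ∀ v ∈ W, ρ g v ∈ W) → W = ⊥ ∨ W = ⊤)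
    (T₀ : Submodule R V) (hT₀fg : T₀.FG) (hT₀span : Submodule.span K (T₀ : Set V) = ⊤)
    (hT₀stab : ∀ g : G, ∀ v ∈ T₀, ρ g v ∈ T₀) (hT₀free : Module.Free R T₀)
    (tr : G → R) (htr : ∀ g, algebraMap R K (tr g) = LinearMap.trace K V (ρ g))
    (ψ ψ' : G →* (R ⧸ maximalIdeal R)ˣ) (hdist : ψ ≠ ψ')
    (hred : ∀ g, Ideal.Quotient.mk (maximalIdeal R) (tr g)
      = (ψ g : R ⧸ maximalIdeal R) + (ψ' g : R ⧸ maximalIdeal R))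
    (g₀ : G) (hg₀ : ψ g₀ ≠ ψ' g₀)
    (lamψ lamψ' : R)
    (hsum : lamψ + lamψ' = tr g₀)
    (hprod : algebraMap R K (lamψ * lamψ') = LinearMap.det (ρ g₀))
    (hlift : Ideal.Quotient.mk (maximalIdeal R) lamψ = (ψ g₀ : R ⧸ maximalIdeal R))
    (hlift' : Ideal.Quotient.mk (maximalIdeal R) lamψ' = (ψ' g₀ : R ⧸ maximalIdeal R)) :
    ∀ T : Submodule R V,
      T.FG → Submodule.span K (T : Set V) = ⊤ → (∀ g : G, ∀ v ∈ T, ρ g v ∈ T) →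
      Module.Free R T →
      (∃ v : V, v ≠ 0 ∧
        Submodule.map ((eigProj R (ρ g₀) lamψ lamψ').restrictScalars R) T
          = Submodule.span R {v}) ∧
      (∃ v : V, v ≠ 0 ∧
        Submodule.map ((eigProj R (ρ g₀) lamψ' lamψ).restrictScalars R) T
          = Submodule.span R {v}) ∧
      (∀ v ∈ Submodule.map ((eigProj R (ρ g₀) lamψ lamψ').restrictScalars R) T,
        ρ g₀ v ∈ Submodule.map ((eigProj R (ρ g₀) lamψ lamψ').restrictScalars R) T) ∧
      (∀ v ∈ Submodule.map ((eigProj R (ρ g₀) lamψ' lamψ).restrictScalars R) T,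
        ρ g₀ v ∈ Submodule.map ((eigProj R (ρ g₀) lamψ' lamψ).restrictScalars R) T) ∧
      Submodule.map ((eigProj R (ρ g₀) lamψ lamψ').restrictScalars R) T
        ⊓ Submodule.map ((eigProj R (ρ g₀) lamψ' lamψ).restrictScalars R) T = ⊥ ∧
      Submodule.map ((eigProj R (ρ g₀) lamψ lamψ').restrictScalars R) T
        ⊔ Submodule.map ((eigProj R (ρ g₀) lamψ' lamψ).restrictScalars R) T = T := by
  
  intro T hTfg hTspan hTstab hTfree
  haveI : FiniteDimensional K V := FiniteDimensional.of_finrank_pos (by rw [hdim]; norm_num)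
  -- λψ - λψ' is a unit
  have hlamne : Ideal.Quotient.mk (maximalIdeal R) (lamψ - lamψ') ≠ 0 := by
    rw [map_sub, hlift, hlift', sub_ne_zero]
    exact fun h => hg₀ (Units.ext h)
  have hunit : IsUnit (lamψ - lamψ') :=
    IsLocalRing.notMem_maximalIdeal.mp
      (fun h => hlamne (Ideal.Quotient.eq_zero_iff_mem.mpr h))
  have hunit' : IsUnit (lamψ' - lamψ) := by
    rw [← neg_sub]; exact hunit.neg
  -- trace and determinant
  have htrf : LinearMap.trace K V (ρ g₀) = algebraMap R K lamψ + algebraMap R K lamψ' := by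
    rw [← map_add, hsum, htr g₀]
  have hdetf : LinearMap.det (ρ g₀ : V →ₗ[K] V)
      = algebraMap R K lamψ * algebraMap R K lamψ' := by
    rw [← map_mul]; exact hprod.symm
  -- Cayley–Hamilton in dimension 2
  set bV : Module.Basis (Fin 2) K V := Module.finBasisOfFinrankEq K V hdim with hbV
  set M : Matrix (Fin 2) (Fin 2) K := LinearMap.toMatrix bV bV (ρ g₀) with hM
  have hMCH : M * M - Matrix.trace M • M + Matrix.det M • 1 = 0 := by
    ext i j
    fin_cases i <;> fin_cases j <;>
      simp [Matrix.mul_apply, Fin.sum_univ_two, Matrix.trace, Matrix.diag,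
        Matrix.det_fin_two, Matrix.one_apply] <;> ring
  have hCH0 : (ρ g₀ : V →ₗ[K] V) ∘ₗ (ρ g₀ : V →ₗ[K] V)
      - (LinearMap.trace K V (ρ g₀)) • (ρ g₀ : V →ₗ[K] V)
      + LinearMap.det (ρ g₀ : V →ₗ[K] V) • (LinearMap.id : V →ₗ[K] V) = 0 := by
    apply (LinearMap.toMatrix bV bV).injective
    rw [map_add, map_sub, map_smul, map_smul, map_zero, LinearMap.toMatrix_comp bV bV bV,
      LinearMap.toMatrix_id, LinearMap.trace_eq_matrix_trace K bV, ← LinearMap.det_toMatrix bV]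
    exact hMCH
  have hCH : ∀ v, (ρ g₀) ((ρ g₀) v)
      = (algebraMap R K lamψ + algebraMap R K lamψ') • (ρ g₀) v
        - (algebraMap R K lamψ * algebraMap R K lamψ') • v := by
    intro v
    have h := LinearMap.ext_iff.mp hCH0 v
    simp only [LinearMap.add_apply, LinearMap.sub_apply, LinearMap.smul_apply,
      LinearMap.comp_apply, LinearMap.id_apply, LinearMap.zero_apply] at h
    rw [htrf, hdetf] at h
    calc (ρ g₀) ((ρ g₀) v)
        = ((ρ g₀) ((ρ g₀) v)
            - (algebraMap R K lamψ + algebraMap R K lamψ') • (ρ g₀) v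
            + (algebraMap R K lamψ * algebraMap R K lamψ') • v)
          + ((algebraMap R K lamψ + algebraMap R K lamψ') • (ρ g₀) v
            - (algebraMap R K lamψ * algebraMap R K lamψ') • v) := by abel
      _ = _ := by rw [h, zero_add]
  have hCH' : ∀ v, (ρ g₀) ((ρ g₀) v)
      = (algebraMap R K lamψ' + algebraMap R K lamψ) • (ρ g₀) v
        - (algebraMap R K lamψ' * algebraMap R K lamψ) • v := by
    intro v
    rw [add_comm (algebraMap R K lamψ') (algebraMap R K lamψ),
      mul_comm (algebraMap R K lamψ') (algebraMap R K lamψ)]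
    exact hCH v
  have htrf' : LinearMap.trace K V (ρ g₀)
      = algebraMap R K lamψ' + algebraMap R K lamψ := by rw [htrf, add_comm]
  obtain ⟨h1, h3, h5, h6⟩ := eigProj_aux hdim (ρ g₀) lamψ lamψ' hCH htrf hunit T hTfg hTspan
    (fun v hv => hTstab g₀ v hv) hTfree
  obtain ⟨h2, h4, -, -⟩ := eigProj_aux hdim (ρ g₀) lamψ' lamψ hCH' htrf' hunit' T hTfg hTspan
    (fun v hv => hTstab g₀ v hv) hTfree
  exact ⟨h1, h2, h3, h4, h5, h6⟩
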